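/- Let V̄ be a finite set of units, O ⊆ V̄ the output units, and A a finite set of arcs (i,j). Suppose given continuously differentiable functions ξ_i, p_i, α_i (for i ∈ V̄), w_{ij}, p_{ij}, β_{ij}, ω_{ij} (for (i,j) ∈ A), φ_i (for i ∈ O), a C¹ function σ : ℝ → ℝ, and for each i ∈ O a C¹ potential V_i : ℝ × ℝ → ℝ. Define a_i(t) := ∑_{j:(i,j)∈A} ω_{ij}(t) w_{ij}(t) ξ_j(t) and the Hamiltonian H(t) := −½∑_{(i,j)∈A} β_{ij}(t) p_{ij}(t)² + ∑_{i∈O} φ_i(t) V_i(ξ_i(t),t) + ∑_{i∈V̄} α_i(t) p_i(t) (−ξ_i(t) + σ(a_i(t))). Assume the Hamilton equations with s ≡ 1 hold for all t: ξ̇_i = α_i(−ξ_i + σ(a_i)); ẇ_{ij} = −β_{ij} p_{ij}; ṗ_i = −φ_i ∂₁V_i(ξ_i,t)·[i∈O] + α_i p_i − ∑_{κ:(κ,i)∈A} α_κ ω_{κi} σ'(a_κ) w_{κi} p_κ; ṗ_{ij} = −α_i ω_{ij} σ'(a_i) p_i ξ_j. Then for every t ≥ 0, E(t) = (H(t) −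 H(0)) + D(t), where E(t) := ∫₀ᵗ ∑_{i∈O} φ_i(τ) ∂₂V_i(ξ_i(τ),τ) dτ and D(t) := D_φ(t) + D_β(t) + D_α(t) + D_ω(t), with D_φ := −∫₀ᵗ ∑_{i∈O} φ̇_i V_i(ξ_i,τ) dτ, D_β := ½∫₀ᵗ ∑_{(i,j)} β̇_{ij} p_{ij}² dτ, D_α := −∫₀ᵗ ∑_{i} α̇_i p_i (−ξ_i + σ(a_i)) dτ, and D_ω := −∫₀ᵗ ∑_{i} α_i p_i σ'(a_i) ∑_j ω̇_{ij} w_{ij} ξ_j dτ. -/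

import Mathlib

section Helpers

open Finset

private lemma sum_mul_fiber_fst' {ι : Type*} [Fintype ι] [DecidableEq ι] (A : Finset (ι × ι))
    (c : ι → ℝ) (F : ι × ι → ℝ) :
    ∑ i : ι, c i * ∑ e ∈ A.filter (fun e => e.1 = i), F e = ∑ e ∈ A, c e.1 * F e := by
  rw [← Finset.sum_fiberwise A (fun e => e.1) (fun e => c e.1 * F e)]
  refine Finset.sum_congr rfl fun i _ => ?_
  rw [Finset.mul_sum]
  exact Finset.sum_congr rfl fun e he => by rw [(Finset.mem_filter.mp he).2]

private lemma sum_mul_fiber_snd' {ι : Type*} [Fintype ι] [DecidableEq ι] (A : Finset (ι × ι))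
    (c : ι → ℝ) (F : ι × ι → ℝ) :
    ∑ i : ι, c i * ∑ e ∈ A.filter (fun e => e.2 = i), F e = ∑ e ∈ A, c e.2 * F e := by
  rw [← Finset.sum_fiberwise A (fun e => e.2) (fun e => c e.2 * F e)]
  refine Finset.sum_congr rfl fun i _ => ?_
  rw [Finset.mul_sum]
  exact Finset.sum_congr rfl fun e he => by rw [(Finset.mem_filter.mp he).2]

private lemma cancel' {ι : Type*} [Fintype ι] [DecidableEq ι] (O : Finset ι) (A : Finset (ι × ι))
    (xi pi al al' fi fi' Vv V1 V2 X s : ι → ℝ)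
    (wv pwv bv bv' ov ov' : ι × ι → ℝ) :
    -(1/2) * ∑ e ∈ A, (bv' e * pwv e ^ 2 + bv e * (2 * pwv e * (-al e.1 * ov e * s e.1 * pi e.1 * xi e.2)))
    + ∑ i ∈ O, (fi' i * Vv i + fi i * (V1 i * (al i * X i) + V2 i))
    + ∑ i, ((al' i * pi i + al i * (-(if i ∈ O then fi i * V1 i else 0) + al i * pi i
            - ∑ e ∈ A.filter (fun e => e.2 = i), al e.1 * ov e * s e.1 * wv e * pi e.1)) * X i
        + al i * pi i * (-(al i * X i) + s i * ∑ e ∈ A.filter (fun e => e.1 = i),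
            ((ov' e * wv e + ov e * (-bv e * pwv e)) * xi e.2 + ov e * wv e * (al e.2 * X e.2))))
    =
    ∑ i ∈ O, fi i * V2 i
    + (∑ i ∈ O, fi' i * Vv i
       - (1/2) * ∑ e ∈ A, bv' e * pwv e ^ 2
       + ∑ i, al' i * pi i * X i
       + ∑ i, al i * pi i * s i * ∑ e ∈ A.filter (fun e => e.1 = i), ov' e * wv e * xi e.2) := by
  have inner1 : ∀ i : ι, ∑ e ∈ A.filter (fun e => e.1 = i),
      ((ov' e * wv e + ov e * (-bv e * pwv e)) * xi e.2 + ov e * wv e * (al e.2 * X e.2))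
      = (∑ e ∈ A.filter (fun e => e.1 = i), ov' e * wv e * xi e.2)
      + (∑ e ∈ A.filter (fun e => e.1 = i), ov e * (-bv e * pwv e) * xi e.2)
      + (∑ e ∈ A.filter (fun e => e.1 = i), ov e * wv e * (al e.2 * X e.2)) := by
    intro i
    rw [← Finset.sum_add_distrib, ← Finset.sum_add_distrib]
    exact Finset.sum_congr rfl fun e _ => by ring
  have hC : ∑ i : ι, ((al' i * pi i + al i * (-(if i ∈ O then fi i * V1 i else 0) + al i * pi i
            - ∑ e ∈ A.filter (fun e => e.2 = i), al e.1 * ov e * s e.1 * wv e * pi e.1)) * X i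
        + al i * pi i * (-(al i * X i) + s i * ∑ e ∈ A.filter (fun e => e.1 = i),
            ((ov' e * wv e + ov e * (-bv e * pwv e)) * xi e.2 + ov e * wv e * (al e.2 * X e.2))))
      = ∑ i : ι, al' i * pi i * X i
      + ∑ i : ι, -(al i * X i * (if i ∈ O then fi i * V1 i else 0))
      + ∑ i : ι, -((X i * al i) * ∑ e ∈ A.filter (fun e => e.2 = i),
            al e.1 * ov e * s e.1 * wv e * pi e.1)
      + ∑ i : ι, al i * pi i * s i * ∑ e ∈ A.filter (fun e => e.1 = i), ov' e * wv e * xi e.2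
      + ∑ i : ι, (al i * pi i * s i) * ∑ e ∈ A.filter (fun e => e.1 = i),
            ov e * (-bv e * pwv e) * xi e.2
      + ∑ i : ι, (al i * pi i * s i) * ∑ e ∈ A.filter (fun e => e.1 = i),
            ov e * wv e * (al e.2 * X e.2) := by
    rw [← Finset.sum_add_distrib, ← Finset.sum_add_distrib, ← Finset.sum_add_distrib,
      ← Finset.sum_add_distrib, ← Finset.sum_add_distrib]
    refine Finset.sum_congr rfl fun i _ => ?_
    rw [inner1 i]; ring
  have hA : (-(1/2) : ℝ) * ∑ e ∈ A, (bv' e * pwv e ^ 2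
        + bv e * (2 * pwv e * (-al e.1 * ov e * s e.1 * pi e.1 * xi e.2)))
      = -(1/2) * ∑ e ∈ A, bv' e * pwv e ^ 2
      + -(1/2) * ∑ e ∈ A, bv e * (2 * pwv e * (-al e.1 * ov e * s e.1 * pi e.1 * xi e.2)) := by
    rw [Finset.sum_add_distrib, mul_add]
  have hB : ∑ i ∈ O, (fi' i * Vv i + fi i * (V1 i * (al i * X i) + V2 i))
      = ∑ i ∈ O, fi' i * Vv i + ∑ i ∈ O, fi i * (V1 i * (al i * X i))
        + ∑ i ∈ O, fi i * V2 i := by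
    rw [← Finset.sum_add_distrib, ← Finset.sum_add_distrib]
    exact Finset.sum_congr rfl fun i _ => by ring
  have h2 : ∑ i : ι, -(al i * X i * (if i ∈ O then fi i * V1 i else 0))
      = -∑ i ∈ O, al i * X i * (fi i * V1 i) := by
    calc ∑ i : ι, -(al i * X i * (if i ∈ O then fi i * V1 i else 0))
        = ∑ i : ι, (if i ∈ O then -(al i * X i * (fi i * V1 i)) else 0) :=
          Finset.sum_congr rfl fun i _ => by split_ifs <;> simp
      _ = ∑ i ∈ Finset.univ ∩ O, -(al i * X i * (fi i * V1 i)) :=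
          Finset.sum_ite_mem _ _ _
      _ = -∑ i ∈ O, al i * X i * (fi i * V1 i) := by
          rw [Finset.univ_inter, ← Finset.sum_neg_distrib]
  have h4 : ∑ i : ι, -((X i * al i) * ∑ e ∈ A.filter (fun e => e.2 = i),
        al e.1 * ov e * s e.1 * wv e * pi e.1)
      = -∑ e ∈ A, (X e.2 * al e.2) * (al e.1 * ov e * s e.1 * wv e * pi e.1) := by
    rw [Finset.sum_neg_distrib]
    exact congrArg Neg.neg (sum_mul_fiber_snd' A (fun i => X i * al i) _)
  have h7 : ∑ i : ι, (al i * pi i * s i) * ∑ e ∈ A.filter (fun e => e.1 = i),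
        ov e * (-bv e * pwv e) * xi e.2
      = ∑ e ∈ A, (al e.1 * pi e.1 * s e.1) * (ov e * (-bv e * pwv e) * xi e.2) :=
    sum_mul_fiber_fst' A _ _
  have h8 : ∑ i : ι, (al i * pi i * s i) * ∑ e ∈ A.filter (fun e => e.1 = i),
        ov e * wv e * (al e.2 * X e.2)
      = ∑ e ∈ A, (al e.1 * pi e.1 * s e.1) * (ov e * wv e * (al e.2 * X e.2)) :=
    sum_mul_fiber_fst' A _ _
  rw [hC, hA, hB, h2, h4, h7, h8]
  have k1 : (-(1/2) : ℝ) * ∑ e ∈ A, bv e * (2 * pwv e * (-al e.1 * ov e * s e.1 * pi e.1 * xi e.2))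
      + ∑ e ∈ A, (al e.1 * pi e.1 * s e.1) * (ov e * (-bv e * pwv e) * xi e.2) = 0 := by
    rw [Finset.mul_sum, ← Finset.sum_add_distrib]
    exact Finset.sum_eq_zero fun e _ => by ring
  have k2 : ∑ i ∈ O, fi i * (V1 i * (al i * X i))
      - ∑ i ∈ O, al i * X i * (fi i * V1 i) = 0 := by
    rw [← Finset.sum_sub_distrib]
    exact Finset.sum_eq_zero fun i _ => by ring
  have k3 : ∑ e ∈ A, (al e.1 * pi e.1 * s e.1) * (ov e * wv e * (al e.2 * X e.2))
      - ∑ e ∈ A, (X e.2 * al e.2) * (al e.1 * ov e * s e.1 * wv e * pi e.1) = 0 := by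
    rw [← Finset.sum_sub_distrib]
    exact Finset.sum_eq_zero fun e _ => by ring
  linear_combination k1 + k2 + k3

private lemma hasDerivAt_comp2' (V : ℝ → ℝ → ℝ) (hV : ContDiff ℝ 1 (fun q : ℝ × ℝ => V q.1 q.2))
    (f : ℝ → ℝ) {f' τ : ℝ} (hf : HasDerivAt f f' τ) :
    HasDerivAt (fun s => V (f s) s)
      (deriv (fun y => V y τ) (f τ) * f' + deriv (fun u => V (f τ) u) τ) τ := by
  set F : ℝ × ℝ → ℝ := fun q => V q.1 q.2 with hFdef
  have hF : HasFDerivAt F (fderiv ℝ F (f τ, τ)) (f τ, τ) :=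
    ((hV.differentiable one_ne_zero) _).hasFDerivAt
  have hγ : HasDerivAt (fun s => ((f s, s) : ℝ × ℝ)) ((f', 1) : ℝ × ℝ) τ :=
    hf.prodMk (hasDerivAt_id τ)
  have hcomp0 := HasFDerivAt.comp_hasDerivAt_of_eq (hl := hF) (hf := hγ) (hy := rfl)
  have hcomp : HasDerivAt (fun s => V (f s) s) (fderiv ℝ F (f τ, τ) (f', 1)) τ := hcomp0
  have h1' := hF.comp_hasDerivAt (f τ) ((hasDerivAt_id (f τ)).prodMk (hasDerivAt_const (f τ) τ))
  have h1 : HasDerivAt (fun y => V y τ) (fderiv ℝ F (f τ, τ) ((1, 0) : ℝ × ℝ)) (f τ) := h1'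
  have h2' := hF.comp_hasDerivAt τ ((hasDerivAt_const τ (f τ)).prodMk (hasDerivAt_id τ))
  have h2 : HasDerivAt (fun u => V (f τ) u) (fderiv ℝ F (f τ, τ) ((0, 1) : ℝ × ℝ)) τ := h2'
  have hv : ((f', 1) : ℝ × ℝ) = f' • ((1, 0) : ℝ × ℝ) + ((0, 1) : ℝ × ℝ) := by
    simp [Prod.ext_iff]
  have hval : fderiv ℝ F (f τ, τ) ((f', 1) : ℝ × ℝ)
      = fderiv ℝ F (f τ, τ) ((1, 0) : ℝ × ℝ) * f' + fderiv ℝ F (f τ, τ) ((0, 1) : ℝ × ℝ) := by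
    rw [hv, map_add, map_smul]
    simp [smul_eq_mul]
    ring
  rw [h1.deriv, h2.deriv, ← hval]
  exact hcomp

private lemma cont_d2' (V : ℝ → ℝ → ℝ) (hV : ContDiff ℝ 1 (fun q : ℝ × ℝ => V q.1 q.2))
    (f : ℝ → ℝ) (hf : Continuous f) :
    Continuous fun τ => deriv (fun u => V (f τ) u) τ := by
  have key : (fun τ => deriv (fun u => V (f τ) u) τ)
      = fun τ => fderiv ℝ (fun q : ℝ × ℝ => V q.1 q.2) (f τ, τ) (0, 1) := by
    funext τ
    have hF : HasFDerivAt (fun q : ℝ × ℝ => V q.1 q.2)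
        (fderiv ℝ (fun q : ℝ × ℝ => V q.1 q.2) (f τ, τ)) (f τ, τ) :=
      ((hV.differentiable one_ne_zero) _).hasFDerivAt
    exact (hF.comp_hasDerivAt τ ((hasDerivAt_const τ (f τ)).prodMk (hasDerivAt_id τ))).deriv
  rw [key]
  have c1 : Continuous fun τ => fderiv ℝ (fun q : ℝ × ℝ => V q.1 q.2) (f τ, τ) :=
    (hV.continuous_fderiv one_ne_zero).comp (hf.prodMk continuous_id)
  exact c1.clm_apply continuous_const

end Helpers

/-- I Principle of Cognidynamics: along trajectories of the Hamilton equations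
of learning (with sign `s ≡ 1`), the environmental energy `E` equals the
variation of the Hamiltonian `ΔH` plus the dissipated energy
`D = D_φ + D_β + D_α + D_ω`. -/
theorem stmt_9 {ι : Type*} [Fintype ι] [DecidableEq ι]
    (O : Finset ι) (A : Finset (ι × ι))
    (ξ p α φ : ι → ℝ → ℝ) (w pw β ω : ι × ι → ℝ → ℝ)
    (σ : ℝ → ℝ) (V : ι → ℝ → ℝ → ℝ)
    (hξ : ∀ i, ContDiff ℝ 1 (ξ i)) (hp : ∀ i, ContDiff ℝ 1 (p i))
    (hα : ∀ i, ContDiff ℝ 1 (α i)) (hφ : ∀ i ∈ O, ContDiff ℝ 1 (φ i))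
    (hw : ∀ e ∈ A, ContDiff ℝ 1 (w e)) (hpw : ∀ e ∈ A, ContDiff ℝ 1 (pw e))
    (hβ : ∀ e ∈ A, ContDiff ℝ 1 (β e)) (hω : ∀ e ∈ A, ContDiff ℝ 1 (ω e))
    (hσ : ContDiff ℝ 1 σ)
    (hV : ∀ i ∈ O, ContDiff ℝ 1 (fun q : ℝ × ℝ => V i q.1 q.2))
    -- activation
    (a : ι → ℝ → ℝ)
    (ha : ∀ i t, a i t = ∑ e ∈ A.filter (fun e => e.1 = i),
      ω e t * w e t * ξ e.2 t)
    -- the Hamiltonian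
    (H : ℝ → ℝ)
    (hH : ∀ t, H t =
      -(1 / 2) * ∑ e ∈ A, β e t * (pw e t) ^ 2
      + ∑ i ∈ O, φ i t * V i (ξ i t) t
      + ∑ i, α i t * p i t * (-(ξ i t) + σ (a i t)))
    -- Hamilton equations with s ≡ 1
    (hamξ : ∀ i t, deriv (ξ i) t = α i t * (-(ξ i t) + σ (a i t)))
    (hamw : ∀ e ∈ A, ∀ t, deriv (w e) t = -β e t * pw e t)
    (hamp : ∀ i t, deriv (p i) t =
      -(if i ∈ O then φ i t * deriv (fun y => V i y t) (ξ i t) else 0)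
      + α i t * p i t
      - ∑ e ∈ A.filter (fun e => e.2 = i),
          α e.1 t * ω e t * deriv σ (a e.1 t) * w e t * p e.1 t)
    (hampw : ∀ e ∈ A, ∀ t, deriv (pw e) t =
      -α e.1 t * ω e t * deriv σ (a e.1 t) * p e.1 t * ξ e.2 t)
    -- the energy terms
    (E Dφ Dβ Dα Dω : ℝ → ℝ)
    (hE : ∀ t, E t = ∫ τ in (0 : ℝ)..t,
      ∑ i ∈ O, φ i τ * deriv (fun u => V i (ξ i τ) u) τ)
    (hDφ : ∀ t, Dφ t = -∫ τ in (0 : ℝ)..t,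
      ∑ i ∈ O, deriv (φ i) τ * V i (ξ i τ) τ)
    (hDβ : ∀ t, Dβ t = (1 / 2) * ∫ τ in (0 : ℝ)..t,
      ∑ e ∈ A, deriv (β e) τ * (pw e τ) ^ 2)
    (hDα : ∀ t, Dα t = -∫ τ in (0 : ℝ)..t,
      ∑ i, deriv (α i) τ * p i τ * (-(ξ i τ) + σ (a i τ)))
    (hDω : ∀ t, Dω t = -∫ τ in (0 : ℝ)..t,
      ∑ i, α i τ * p i τ * deriv σ (a i τ)
        * ∑ e ∈ A.filter (fun e => e.1 = i), deriv (ω e) τ * w e τ * ξ e.2 τ) :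
    ∀ t ≥ (0 : ℝ), E t = (H t - H 0) + (Dφ t + Dβ t + Dα t + Dω t) := by
  intro t _ht
  -- continuity facts
  have conta : ∀ i, Continuous (a i) := by
    intro i
    have hfa : a i = fun s => ∑ e ∈ A.filter (fun e => e.1 = i),
        ω e s * w e s * ξ e.2 s := funext (ha i)
    rw [hfa]
    refine continuous_finset_sum _ fun e he => ?_
    have heA : e ∈ A := (Finset.mem_filter.mp he).1
    exact (((hω e heA).continuous.mul (hw e heA).continuous)).mul (hξ e.2).continuous
  have conte : Continuous fun τ => ∑ i ∈ O, φ i τ * deriv (fun u => V i (ξ i τ) u) τ :=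
    continuous_finset_sum _ fun i hi =>
      (hφ i hi).continuous.mul (cont_d2' (V i) (hV i hi) (ξ i) (hξ i).continuous)
  have contg1 : Continuous fun τ => ∑ i ∈ O, deriv (φ i) τ * V i (ξ i τ) τ := by
    refine continuous_finset_sum _ fun i hi => ?_
    have cV : Continuous fun τ => V i (ξ i τ) τ :=
      (hV i hi).continuous.comp ((hξ i).continuous.prodMk continuous_id)
    exact ((hφ i hi).continuous_deriv le_rfl).mul cV
  have contg2 : Continuous fun τ => ∑ e ∈ A, deriv (β e) τ * (pw e τ) ^ 2 :=
    continuous_finset_sum _ fun e he =>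
      ((hβ e he).continuous_deriv le_rfl).mul ((hpw e he).continuous.pow 2)
  have contg3 : Continuous fun τ => ∑ i, deriv (α i) τ * p i τ * (-(ξ i τ) + σ (a i τ)) := by
    refine continuous_finset_sum _ fun i _ => ?_
    have cσa : Continuous fun τ => σ (a i τ) := hσ.continuous.comp (conta i)
    exact (((hα i).continuous_deriv le_rfl).mul (hp i).continuous).mul
      ((hξ i).continuous.neg.add cσa)
  have contg4 : Continuous fun τ => ∑ i, α i τ * p i τ * deriv σ (a i τ)
      * ∑ e ∈ A.filter (fun e => e.1 = i), deriv (ω e) τ * w e τ * ξ e.2 τ := by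
    refine continuous_finset_sum _ fun i _ => ?_
    have cσ' : Continuous fun τ => deriv σ (a i τ) :=
      (hσ.continuous_deriv le_rfl).comp (conta i)
    have cin : Continuous fun τ => ∑ e ∈ A.filter (fun e => e.1 = i),
        deriv (ω e) τ * w e τ * ξ e.2 τ := by
      refine continuous_finset_sum _ fun e he => ?_
      have heA : e ∈ A := (Finset.mem_filter.mp he).1
      exact (((hω e heA).continuous_deriv le_rfl).mul (hw e heA).continuous).mul
        (hξ e.2).continuous
    exact (((hα i).continuous.mul (hp i).continuous).mul cσ').mul cin
  have contrest : Continuous fun τ =>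
      ∑ i ∈ O, deriv (φ i) τ * V i (ξ i τ) τ
      - (1/2) * ∑ e ∈ A, deriv (β e) τ * (pw e τ) ^ 2
      + ∑ i, deriv (α i) τ * p i τ * (-(ξ i τ) + σ (a i τ))
      + ∑ i, α i τ * p i τ * deriv σ (a i τ)
          * ∑ e ∈ A.filter (fun e => e.1 = i), deriv (ω e) τ * w e τ * ξ e.2 τ :=
    ((contg1.sub (continuous_const.mul contg2)).add contg3).add contg4
  -- the key derivative computation
  have hkey : ∀ τ : ℝ, HasDerivAt H
      (∑ i ∈ O, φ i τ * deriv (fun u => V i (ξ i τ) u) τ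
      + (∑ i ∈ O, deriv (φ i) τ * V i (ξ i τ) τ
        - (1/2) * ∑ e ∈ A, deriv (β e) τ * (pw e τ) ^ 2
        + ∑ i, deriv (α i) τ * p i τ * (-(ξ i τ) + σ (a i τ))
        + ∑ i, α i τ * p i τ * deriv σ (a i τ)
            * ∑ e ∈ A.filter (fun e => e.1 = i), deriv (ω e) τ * w e τ * ξ e.2 τ)) τ := by
    intro τ
    have hξd : ∀ i, HasDerivAt (ξ i) (α i τ * (-(ξ i τ) + σ (a i τ))) τ := fun i =>
      hamξ i τ ▸ ((hξ i).differentiable one_ne_zero τ).hasDerivAt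
    have hpd : ∀ i, HasDerivAt (p i)
        (-(if i ∈ O then φ i τ * deriv (fun y => V i y τ) (ξ i τ) else 0)
          + α i τ * p i τ
          - ∑ e ∈ A.filter (fun e => e.2 = i),
              α e.1 τ * ω e τ * deriv σ (a e.1 τ) * w e τ * p e.1 τ) τ := fun i =>
      hamp i τ ▸ ((hp i).differentiable one_ne_zero τ).hasDerivAt
    have hwd : ∀ e ∈ A, HasDerivAt (w e) (-β e τ * pw e τ) τ := fun e he =>
      hamw e he τ ▸ ((hw e he).differentiable one_ne_zero τ).hasDerivAt
    have hpwd : ∀ e ∈ A, HasDerivAt (pw e)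
        (-α e.1 τ * ω e τ * deriv σ (a e.1 τ) * p e.1 τ * ξ e.2 τ) τ := fun e he =>
      hampw e he τ ▸ ((hpw e he).differentiable one_ne_zero τ).hasDerivAt
    have hφd : ∀ i ∈ O, HasDerivAt (φ i) (deriv (φ i) τ) τ := fun i hi =>
      ((hφ i hi).differentiable one_ne_zero τ).hasDerivAt
    have hαd : ∀ i, HasDerivAt (α i) (deriv (α i) τ) τ := fun i =>
      ((hα i).differentiable one_ne_zero τ).hasDerivAt
    have hβd : ∀ e ∈ A, HasDerivAt (β e) (deriv (β e) τ) τ := fun e he =>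
      ((hβ e he).differentiable one_ne_zero τ).hasDerivAt
    have hωd : ∀ e ∈ A, HasDerivAt (ω e) (deriv (ω e) τ) τ := fun e he =>
      ((hω e he).differentiable one_ne_zero τ).hasDerivAt
    have hpw2 : ∀ e ∈ A, HasDerivAt (fun s => pw e s ^ 2)
        (2 * pw e τ * (-α e.1 τ * ω e τ * deriv σ (a e.1 τ) * p e.1 τ * ξ e.2 τ)) τ := by
      intro e he
      exact ((hpwd e he).fun_pow 2).congr_deriv (by norm_num)
    have had : ∀ i, HasDerivAt (a i)
        (∑ e ∈ A.filter (fun e => e.1 = i),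
          ((deriv (ω e) τ * w e τ + ω e τ * (-β e τ * pw e τ)) * ξ e.2 τ
            + ω e τ * w e τ * (α e.2 τ * (-(ξ e.2 τ) + σ (a e.2 τ))))) τ := by
      intro i
      have hfa : a i = fun s => ∑ e ∈ A.filter (fun e => e.1 = i),
          ω e s * w e s * ξ e.2 s := funext (ha i)
      rw [hfa]
      refine HasDerivAt.fun_sum fun e he => ?_
      have heA : e ∈ A := (Finset.mem_filter.mp he).1
      exact ((hωd e heA).fun_mul (hwd e heA)).fun_mul (hξd e.2)
    have hXd : ∀ i, HasDerivAt (fun s => -(ξ i s) + σ (a i s))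
        (-(α i τ * (-(ξ i τ) + σ (a i τ))) + deriv σ (a i τ)
          * ∑ e ∈ A.filter (fun e => e.1 = i),
            ((deriv (ω e) τ * w e τ + ω e τ * (-β e τ * pw e τ)) * ξ e.2 τ
              + ω e τ * w e τ * (α e.2 τ * (-(ξ e.2 τ) + σ (a e.2 τ))))) τ := by
      intro i
      have hσd : HasDerivAt σ (deriv σ (a i τ)) (a i τ) :=
        (hσ.differentiable one_ne_zero _).hasDerivAt
      have hcomp : HasDerivAt (fun s => σ (a i s))
          (deriv σ (a i τ)
            * ∑ e ∈ A.filter (fun e => e.1 = i),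
              ((deriv (ω e) τ * w e τ + ω e τ * (-β e τ * pw e τ)) * ξ e.2 τ
                + ω e τ * w e τ * (α e.2 τ * (-(ξ e.2 τ) + σ (a e.2 τ))))) τ :=
        hσd.comp τ (had i)
      exact (hξd i).neg.add hcomp
    have hRAW := (((HasDerivAt.fun_sum (fun e he => (hβd e he).fun_mul (hpw2 e he))).const_mul
        (-(1/2) : ℝ)).add
      (HasDerivAt.fun_sum fun i hi =>
        (hφd i hi).fun_mul (hasDerivAt_comp2' (V i) (hV i hi) (ξ i) (hξd i)))).add
      (HasDerivAt.fun_sum (u := Finset.univ) fun i _ => ((hαd i).fun_mul (hpd i)).fun_mul (hXd i))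
    have hfun : H = fun s =>
        -(1 / 2) * ∑ e ∈ A, β e s * (pw e s) ^ 2
        + ∑ i ∈ O, φ i s * V i (ξ i s) s
        + ∑ i, α i s * p i s * (-(ξ i s) + σ (a i s)) := funext hH
    have veq := cancel' O A (fun i => ξ i τ) (fun i => p i τ) (fun i => α i τ)
      (fun i => deriv (α i) τ) (fun i => φ i τ) (fun i => deriv (φ i) τ)
      (fun i => V i (ξ i τ) τ) (fun i => deriv (fun y => V i y τ) (ξ i τ))
      (fun i => deriv (fun u => V i (ξ i τ) u) τ)
      (fun i => -(ξ i τ) + σ (a i τ)) (fun i => deriv σ (a i τ))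
      (fun e => w e τ) (fun e => pw e τ) (fun e => β e τ) (fun e => deriv (β e) τ)
      (fun e => ω e τ) (fun e => deriv (ω e) τ)
    rw [hfun, ← veq]
    exact hRAW
  -- FTC
  have hftc : (∫ τ in (0:ℝ)..t,
      (∑ i ∈ O, φ i τ * deriv (fun u => V i (ξ i τ) u) τ
      + (∑ i ∈ O, deriv (φ i) τ * V i (ξ i τ) τ
        - (1/2) * ∑ e ∈ A, deriv (β e) τ * (pw e τ) ^ 2
        + ∑ i, deriv (α i) τ * p i τ * (-(ξ i τ) + σ (a i τ))
        + ∑ i, α i τ * p i τ * deriv σ (a i τ)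
            * ∑ e ∈ A.filter (fun e => e.1 = i), deriv (ω e) τ * w e τ * ξ e.2 τ)))
      = H t - H 0 :=
    intervalIntegral.integral_eq_sub_of_hasDerivAt (fun τ _ => hkey τ)
      ((conte.add contrest).intervalIntegrable 0 t)
  have hs1 : (∫ τ in (0:ℝ)..t,
      (∑ i ∈ O, φ i τ * deriv (fun u => V i (ξ i τ) u) τ
      + (∑ i ∈ O, deriv (φ i) τ * V i (ξ i τ) τ
        - (1/2) * ∑ e ∈ A, deriv (β e) τ * (pw e τ) ^ 2
        + ∑ i, deriv (α i) τ * p i τ * (-(ξ i τ) + σ (a i τ))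
        + ∑ i, α i τ * p i τ * deriv σ (a i τ)
            * ∑ e ∈ A.filter (fun e => e.1 = i), deriv (ω e) τ * w e τ * ξ e.2 τ)))
      = (∫ τ in (0:ℝ)..t, ∑ i ∈ O, φ i τ * deriv (fun u => V i (ξ i τ) u) τ)
      + ∫ τ in (0:ℝ)..t,
        (∑ i ∈ O, deriv (φ i) τ * V i (ξ i τ) τ
        - (1/2) * ∑ e ∈ A, deriv (β e) τ * (pw e τ) ^ 2
        + ∑ i, deriv (α i) τ * p i τ * (-(ξ i τ) + σ (a i τ))
        + ∑ i, α i τ * p i τ * deriv σ (a i τ)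
            * ∑ e ∈ A.filter (fun e => e.1 = i), deriv (ω e) τ * w e τ * ξ e.2 τ) :=
    intervalIntegral.integral_add (conte.intervalIntegrable 0 t)
      (contrest.intervalIntegrable 0 t)
  have hs2 : (∫ τ in (0:ℝ)..t,
        (∑ i ∈ O, deriv (φ i) τ * V i (ξ i τ) τ
        - (1/2) * ∑ e ∈ A, deriv (β e) τ * (pw e τ) ^ 2
        + ∑ i, deriv (α i) τ * p i τ * (-(ξ i τ) + σ (a i τ))
        + ∑ i, α i τ * p i τ * deriv σ (a i τ)
            * ∑ e ∈ A.filter (fun e => e.1 = i), deriv (ω e) τ * w e τ * ξ e.2 τ))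
      = (∫ τ in (0:ℝ)..t,
        (∑ i ∈ O, deriv (φ i) τ * V i (ξ i τ) τ
        - (1/2) * ∑ e ∈ A, deriv (β e) τ * (pw e τ) ^ 2
        + ∑ i, deriv (α i) τ * p i τ * (-(ξ i τ) + σ (a i τ))))
      + ∫ τ in (0:ℝ)..t, ∑ i, α i τ * p i τ * deriv σ (a i τ)
            * ∑ e ∈ A.filter (fun e => e.1 = i), deriv (ω e) τ * w e τ * ξ e.2 τ :=
    intervalIntegral.integral_add
      (((contg1.sub (continuous_const.mul contg2)).add contg3).intervalIntegrable 0 t)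
      (contg4.intervalIntegrable 0 t)
  have hs3 : (∫ τ in (0:ℝ)..t,
        (∑ i ∈ O, deriv (φ i) τ * V i (ξ i τ) τ
        - (1/2) * ∑ e ∈ A, deriv (β e) τ * (pw e τ) ^ 2
        + ∑ i, deriv (α i) τ * p i τ * (-(ξ i τ) + σ (a i τ))))
      = (∫ τ in (0:ℝ)..t,
        (∑ i ∈ O, deriv (φ i) τ * V i (ξ i τ) τ
        - (1/2) * ∑ e ∈ A, deriv (β e) τ * (pw e τ) ^ 2))
      + ∫ τ in (0:ℝ)..t, ∑ i, deriv (α i) τ * p i τ * (-(ξ i τ) + σ (a i τ)) :=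
    intervalIntegral.integral_add
      ((contg1.sub (continuous_const.mul contg2)).intervalIntegrable 0 t)
      (contg3.intervalIntegrable 0 t)
  have hs4 : (∫ τ in (0:ℝ)..t,
        (∑ i ∈ O, deriv (φ i) τ * V i (ξ i τ) τ
        - (1/2) * ∑ e ∈ A, deriv (β e) τ * (pw e τ) ^ 2))
      = (∫ τ in (0:ℝ)..t, ∑ i ∈ O, deriv (φ i) τ * V i (ξ i τ) τ)
      - ∫ τ in (0:ℝ)..t, (1/2) * ∑ e ∈ A, deriv (β e) τ * (pw e τ) ^ 2 :=
    intervalIntegral.integral_sub (contg1.intervalIntegrable 0 t)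
      ((continuous_const.mul contg2).intervalIntegrable 0 t)
  have hs5 : (∫ τ in (0:ℝ)..t, (1/2) * ∑ e ∈ A, deriv (β e) τ * (pw e τ) ^ 2)
      = (1/2) * ∫ τ in (0:ℝ)..t, ∑ e ∈ A, deriv (β e) τ * (pw e τ) ^ 2 :=
    intervalIntegral.integral_const_mul _ _
  rw [hE t, hDφ t, hDβ t, hDα t, hDω t, ← hftc, hs1, hs2, hs3, hs4, hs5]
  ring
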